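/- Let (K, v) be a henselian valued field whose value group vK is not closed in its divisible hull, i.e. there exist n ∈ ℕ and a ∈ vK such that a is not n-divisible in vK while for every c ∈ vK with c > 0 there exists g ∈ vK with |a − n·g| < c. Then the valuation ring 𝒪_v is definable with one parameter in the language of rings: there are an Lr-formula φ(x, y) and an element ε ∈ K such that 𝒪_v = {x ∈ K : K ⊨ φ(x, ε)}. -/

import Mathlib

open Polynomial FirstOrder FirstOrder.Ring

section ValuationPrelude

variable {K : Type*} [Field K] {G : Type*} [AddCommGroup G] [LinearOrder G] [IsOrderedAddMonoid G]

/-- `v : K → G ∪ {∞}` is a (surjective) valuation on the field `K` with value group `G`. -/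
def IsValuation (v : K → WithTop G) : Prop :=
  (∀ x, v x = ⊤ ↔ x = 0) ∧
  (∀ x y, v (x * y) = v x + v y) ∧
  (∀ x y, min (v x) (v y) ≤ v (x + y)) ∧
  (∀ g : G, ∃ x, v x = (g : WithTop G))

/-- Hensel's Lemma holds for `(K, v)` for all polynomials of degree at most `n`. -/
def DegLEHenselian (v : K → WithTop G) (n : ℕ) : Prop :=
  ∀ f : Polynomial K, f.natDegree ≤ n → (∀ i, (0 : WithTop G) ≤ v (f.coeff i)) →
    ∀ a : K, (0 : WithTop G) ≤ v a →
      (0 : WithTop G) < v (f.eval a) →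
      ¬ (0 : WithTop G) < v (f.derivative.eval a) →
      ∃ b : K, (0 : WithTop G) ≤ v b ∧ f.eval b = 0 ∧ (0 : WithTop G) < v (b - a)

/-- `(K, v)` is henselian: Hensel's Lemma holds for all polynomials. -/
def IsHenselianValuation (v : K → WithTop G) : Prop :=
  ∀ n : ℕ, DegLEHenselian v n

end ValuationPrelude

/-- A subset `S ⊆ K` is definable with one parameter in the language of rings. -/
def DefinableOneParamRing (K : Type*) [Field K] (S : Set K) : Prop :=
  letI := compatibleRingOfRing K
  ∃ (φ : Language.ring.Formula (Fin 2)) (ε : K),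
    S = {x : K | φ.Realize (fun i : Fin 2 => if i = 0 then x else ε)}

namespace StmtAux

open FirstOrder.Language

section Valu

variable {K : Type*} [Field K] {G : Type*} [AddCommGroup G] [LinearOrder G] [IsOrderedAddMonoid G] {v : K → WithTop G}

theorem v_one (hval : IsValuation v) : v 1 = 0 := by
  have h0 := hval.1
  have h := hval.2.1 1 1
  rw [one_mul] at h
  cases hv : v 1 with
  | top => exact absurd ((h0 1).1 hv) one_ne_zero
  | coe g =>
    rw [hv] at h
    have hg : g = g + g := by exact_mod_cast h
    have hg0 : g + 0 = g + g := by rw [add_zero]; exact hg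
    have : (0 : G) = g := add_left_cancel hg0
    simp [← this]

theorem v_neg (hval : IsValuation v) (x : K) : v (-x) = v x := by
  have h0 := hval.1
  have hm := hval.2.1
  have hneg1 : v (-1 : K) = 0 := by
    have h := hm (-1 : K) (-1)
    rw [neg_mul_neg, one_mul, v_one hval] at h
    cases hv : v (-1 : K) with
    | top => exact absurd ((h0 (-1)).1 hv) (by norm_num)
    | coe g =>
      rw [hv] at h
      have : g + g = 0 := by exact_mod_cast h.symm
      have : g = 0 := by
        rcases lt_trichotomy g 0 with h1 | h1 | h1
        · exact absurd this (by have h2 := add_lt_add h1 h1; rw [add_zero] at h2; exact ne_of_lt h2)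
        · exact h1
        · exact absurd this (by have h2 := add_lt_add h1 h1; rw [add_zero] at h2; exact ne_of_gt h2)
      simp [this]
  have h := hm (-1 : K) x
  rw [neg_one_mul, hneg1, zero_add] at h
  exact h

theorem v_pow (hval : IsValuation v) {x : K} {ξ : G} (hx : v x = (ξ : WithTop G)) (k : ℕ) :
    v (x ^ k) = ((k • ξ : G) : WithTop G) := by
  induction k with
  | zero => simpa using v_one hval
  | succ m ih =>
    rw [pow_succ, hval.2.1, ih, hx, succ_nsmul, WithTop.coe_add]

theorem v_add_eq (hval : IsValuation v) {x y : K} (h : v x < v y) : v (x + y) = v x := by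
  have hadd := hval.2.2.1
  refine le_antisymm ?_ ?_
  · have h2 := hadd (x + y) (-y)
    rw [v_neg hval, add_neg_cancel_right] at h2
    rcases min_le_iff.mp h2 with h3 | h3
    · exact h3
    · exact absurd h3 (not_le.mpr h)
  · exact le_trans (le_min le_rfl h.le) (hadd x y)

theorem v_ne_top (hval : IsValuation v) {x : K} {ξ : G} (hx : v x = (ξ : WithTop G)) :
    x ≠ 0 := fun h => by
  rw [h, (hval.1 0).2 rfl] at hx
  exact (WithTop.coe_ne_top hx.symm)

theorem v_coe_of_ne_zero (hval : IsValuation v) {x : K} (hx : x ≠ 0) :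
    ∃ ξ : G, v x = (ξ : WithTop G) := by
  cases hvx : v x with
  | top => exact absurd ((hval.1 x).1 hvx) hx
  | coe ξ => exact ⟨ξ, rfl⟩

/-- Artin–Schreier-style solvability via Hensel's lemma. -/
theorem as_solvable (hval : IsValuation v) (hhens : IsHenselianValuation v)
    {n : ℕ} (hn : 2 ≤ n) {u : K} (hu : 0 < v u) :
    ∃ y : K, y ^ n - y = u := by
  have h0 := hval.1
  have hadd := hval.2.2.1
  set f : Polynomial K := X ^ n - X - C u with hf
  have hsub : ∀ x y : K, 0 ≤ v x → 0 ≤ v y → 0 ≤ v (x - y) := by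
    intro x y hx hy
    have h := hadd x (-y)
    rw [v_neg hval] at h
    exact le_trans (le_min hx hy) (by rw [sub_eq_add_neg]; exact h)
  have hv0 : v (0 : K) = ⊤ := (h0 0).2 rfl
  have hdeg : f.natDegree ≤ n := by
    refine le_trans (natDegree_sub_le _ _) ?_
    rw [natDegree_C]
    refine le_trans (max_le_max (natDegree_sub_le _ _) le_rfl) ?_
    simp only [natDegree_X_pow, natDegree_X]
    omega
  have hcoeff : ∀ i, (0 : WithTop G) ≤ v (f.coeff i) := by
    intro i
    have hci : f.coeff i = (if i = n then (1:K) else 0) - (if 1 = i then (1:K) else 0)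
        - (if i = 0 then u else 0) := by
      simp [hf, coeff_sub, coeff_X_pow, coeff_X, coeff_C]
    rw [hci]
    refine hsub _ _ (hsub _ _ ?_ ?_) ?_ <;> split_ifs <;> simp [hv0, v_one hval, hu.le]
  have heval : f.eval 0 = -u := by
    simp [hf, zero_pow (by omega : n ≠ 0)]
  have hder : f.derivative.eval 0 = -1 := by
    have : f.derivative = C (n : K) * X ^ (n - 1) - 1 := by
      simp [hf, derivative_X_pow]
    rw [this]
    simp [zero_pow (by omega : n - 1 ≠ 0)]
  obtain ⟨b, hb0, hbe, -⟩ := hhens n f hdeg hcoeff 0 (by rw [hv0]; exact le_top)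
      (by rw [heval, v_neg hval]; exact hu)
      (by rw [hder, v_neg hval, v_one hval]; exact lt_irrefl 0)
  refine ⟨b, ?_⟩
  have hz : b ^ n - b - u = 0 := by simpa [hf] using hbe
  exact sub_eq_zero.mp hz

end Valu

section GroupSide

variable {G : Type*} [AddCommGroup G] [LinearOrder G] [IsOrderedAddMonoid G]

theorem onesided (hG : ∃ (n : ℕ) (a : G), 0 < n ∧ (¬ ∃ h : G, a = n • h) ∧
      ∀ c : G, 0 < c → ∃ g : G, |a - n • g| < c) :
    ∃ (n : ℕ) (a : G), 2 ≤ n ∧ (¬ ∃ h : G, a = n • h) ∧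
      ∀ c : G, 0 < c → ∃ g : G, 0 < a - n • g ∧ a - n • g ≤ c := by
  obtain ⟨n, a, hn, hnd, happ⟩ := hG
  have hn1 : n ≠ 1 := by
    intro h
    exact hnd ⟨a, by rw [h, one_smul]⟩
  have hn2 : 2 ≤ n := by omega
  by_cases H : ∀ c : G, 0 < c → ∃ g : G, 0 < a - n • g ∧ a - n • g ≤ c
  · exact ⟨n, a, hn2, hnd, H⟩
  · push_neg at H
    obtain ⟨c₀, hc₀, Hc⟩ := H
    refine ⟨n, -a, hn2, ?_, ?_⟩
    · rintro ⟨h, hh⟩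
      exact hnd ⟨-h, by rw [smul_neg, ← hh, neg_neg]⟩
    · intro c hc
      obtain ⟨g, hg⟩ := happ (min c c₀) (lt_min hc hc₀)
      have hne : a - n • g ≠ 0 := fun h => hnd ⟨g, sub_eq_zero.mp h⟩
      rcases lt_or_gt_of_ne hne with hlt | hgt
      · refine ⟨-g, ?_, ?_⟩
        · rw [smul_neg, sub_neg_eq_add, neg_add_eq_sub]
          exact sub_pos.mpr (sub_lt_zero.mp hlt)
        · rw [smul_neg, sub_neg_eq_add, neg_add_eq_sub]
          have h1 : n • g - a ≤ |a - n • g| := by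
            rw [abs_sub_comm]; exact le_abs_self _
          exact h1.trans (hg.le.trans (min_le_left c c₀))
      · exact absurd (Hc g hgt)
          (not_lt.mpr ((le_abs_self _).trans (hg.le.trans (min_le_right c c₀))))

end GroupSide

section FormulaSide

variable {α : Type*}

/-- `n`-th power of a term in the language of rings. -/
def termPow (t : Language.ring.Term α) : ℕ → Language.ring.Term α
  | 0 => 1
  | k+1 => termPow t k * t

theorem realize_termPow {R : Type*} [Field R] [CompatibleRing R]
    (t : Language.ring.Term α) (k : ℕ) (f : α → R) :
    (termPow t k).realize f = (t.realize f) ^ k := by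
  induction k with
  | zero => simp [termPow]
  | succ m ih => simp [termPow, pow_succ, ih]

/-- `y^n - y = t * x^n` with `t = inl 1`, `x = inr 0`, `y = inr 1`. -/
def psi1 (n : ℕ) : Language.ring.BoundedFormula (Fin 2) 2 :=
  Term.bdEqual (termPow (Language.var (Sum.inr 1)) n + (- Language.var (Sum.inr 1)))
    (Language.var (Sum.inl 1) * termPow (Language.var (Sum.inr 0)) n)

/-- `y^n - y = t * (z*x)^n` with `z = inl 0`, `t = inl 1`, `x = inr 0`, `y = inr 1`. -/
def psi2 (n : ℕ) : Language.ring.BoundedFormula (Fin 2) 2 :=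
  Term.bdEqual (termPow (Language.var (Sum.inr 1)) n + (- Language.var (Sum.inr 1)))
    (Language.var (Sum.inl 1) *
      termPow (Language.var (Sum.inl 0) * Language.var (Sum.inr 0)) n)

/-- The defining formula of the valuation ring. -/
def phi (n : ℕ) : Language.ring.Formula (Fin 2) :=
  BoundedFormula.all (((psi1 n).ex).imp ((psi2 n).ex))

theorem realize_phi (n : ℕ) {K : Type*} [Field K] :
    letI := compatibleRingOfRing K
    ∀ (f : Fin 2 → K), (phi n).Realize f ↔
      ∀ x : K, (∃ y : K, y ^ n + (-y) = f 1 * x ^ n) →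
        (∃ y : K, y ^ n + (-y) = f 1 * (f 0 * x) ^ n) := by
  letI := compatibleRingOfRing K
  intro f
  rw [phi, Formula.Realize]
  rw [BoundedFormula.realize_all]
  refine forall_congr' fun x => ?_
  rw [BoundedFormula.realize_imp, BoundedFormula.realize_ex, BoundedFormula.realize_ex]
  apply imp_congr <;>
  · refine exists_congr fun y => ?_
    simp only [psi1, psi2, BoundedFormula.realize_bdEqual]
    simp [realize_termPow, Fin.snoc]

end FormulaSide

end StmtAux

theorem stmt0 {K : Type*} [Field K] {G : Type*} [AddCommGroup G] [LinearOrder G] [IsOrderedAddMonoid G]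
    (v : K → WithTop G) (hval : IsValuation v) (hhens : IsHenselianValuation v)
    (hG : ∃ (n : ℕ) (a : G), 0 < n ∧ (¬ ∃ h : G, a = n • h) ∧
      ∀ c : G, 0 < c → ∃ g : G, |a - n • g| < c) :
    DefinableOneParamRing K {x : K | (0 : WithTop G) ≤ v x} := by
  classical
  obtain ⟨n, a, hn2, hnd, happ⟩ := StmtAux.onesided hG
  have h0 := hval.1
  have hm := hval.2.1
  have hadd := hval.2.2.1
  have hsurj := hval.2.2.2
  obtain ⟨t, ht⟩ := hsurj a
  have ht0 : t ≠ 0 := StmtAux.v_ne_top hval ht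
  -- the valuation of `t * x ^ n`
  have hvu : ∀ (x : K) (ξ : G), v x = (ξ : WithTop G) →
      v (t * x ^ n) = ((a + n • ξ : G) : WithTop G) := by
    intro x ξ hξ
    rw [hm, ht, StmtAux.v_pow hval hξ, WithTop.coe_add]
  -- characterization of solvability
  have hchar : ∀ x : K, (∃ y : K, y ^ n + (-y) = t * x ^ n) ↔
      (x = 0 ∨ ∃ ξ : G, v x = (ξ : WithTop G) ∧ 0 < a + n • ξ) := by
    intro x
    constructor
    · rintro ⟨y, hy⟩
      by_cases hx : x = 0
      · exact Or.inl hx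
      right
      obtain ⟨ξ, hξ⟩ := StmtAux.v_coe_of_ne_zero hval hx
      refine ⟨ξ, hξ, ?_⟩
      by_contra hle
      push_neg at hle
      rcases hle.lt_or_eq with hlt | heq
      · -- v u < 0 case
        have huneg : v (y ^ n + (-y)) < 0 := by
          rw [hy, hvu x ξ hξ]
          exact_mod_cast hlt
        have hy0 : y ≠ 0 := by
          intro h
          rw [h, zero_pow (by omega : n ≠ 0), neg_zero, add_zero] at hy
          exact (mul_ne_zero ht0 (pow_ne_zero n hx)) hy.symm
        obtain ⟨η, hη⟩ := StmtAux.v_coe_of_ne_zero hval hy0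
        have hηneg : η < 0 := by
          by_contra hge
          push_neg at hge
          have h1 : (0 : WithTop G) ≤ v (y ^ n) := by
            rw [StmtAux.v_pow hval hη]
            exact_mod_cast nsmul_nonneg hge n
          have h2 : (0 : WithTop G) ≤ v (-y) := by
            rw [StmtAux.v_neg hval, hη]
            exact_mod_cast hge
          exact absurd huneg (not_lt.mpr (le_trans (le_min h1 h2) (hadd (y ^ n) (-y))))
        obtain ⟨m, rfl⟩ : ∃ m, n = m + 1 := ⟨n - 1, by omega⟩
        have hsmul_lt' : (m + 1) • η < η := by
          rw [succ_nsmul]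
          have hmneg : m • η < 0 := by
            have : 0 < m • (-η) := nsmul_pos (neg_pos.mpr hηneg) (by omega)
            rw [smul_neg] at this
            exact neg_pos.mp this
          calc m • η + η < 0 + η := add_lt_add_left hmneg η
          _ = η := zero_add η
        have hlt2 : v (y ^ (m + 1)) < v (-y) := by
          rw [StmtAux.v_pow hval hη, StmtAux.v_neg hval, hη]
          exact_mod_cast hsmul_lt'
        have hkey : v (y ^ (m + 1) + (-y)) = (((m + 1) • η : G) : WithTop G) := by
          rw [StmtAux.v_add_eq hval hlt2, StmtAux.v_pow hval hη]
        rw [hy, hvu x ξ hξ] at hkey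
        have heq2 : a + (m + 1) • ξ = (m + 1) • η := by exact_mod_cast hkey
        exact hnd ⟨η - ξ, by rw [smul_sub]; exact eq_sub_of_add_eq heq2⟩
      · -- v u = 0 case
        refine hnd ⟨-ξ, ?_⟩
        rw [smul_neg]
        exact eq_neg_of_add_eq_zero_left heq
    · rintro (rfl | ⟨ξ, hξ, hpos⟩)
      · exact ⟨0, by simp [zero_pow (by omega : n ≠ 0)]⟩
      · have hu : (0 : WithTop G) < v (t * x ^ n) := by
          rw [hvu x ξ hξ]
          exact_mod_cast hpos
        obtain ⟨y, hy⟩ := StmtAux.as_solvable hval hhens hn2 hu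
        exact ⟨y, by rw [← sub_eq_add_neg]; exact hy⟩
  -- the set equality
  have hset : {x : K | (0 : WithTop G) ≤ v x} = {z : K | ∀ x : K,
      (∃ y : K, y ^ n + (-y) = t * x ^ n) → (∃ y : K, y ^ n + (-y) = t * (z * x) ^ n)} := by
    ext z
    simp only [Set.mem_setOf_eq]
    constructor
    · intro hz x hx
      rw [hchar] at hx ⊢
      by_cases hz0 : z = 0
      · exact Or.inl (by rw [hz0, zero_mul])
      rcases hx with rfl | ⟨ξ, hξ, hpos⟩
      · exact Or.inl (mul_zero z)
      right
      obtain ⟨ζ, hζ⟩ := StmtAux.v_coe_of_ne_zero hval hz0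
      have hζ0 : 0 ≤ ζ := by
        rw [hζ] at hz
        exact_mod_cast hz
      refine ⟨ζ + ξ, by rw [hm, hζ, hξ, WithTop.coe_add], ?_⟩
      have hle : a + n • ξ ≤ a + n • (ζ + ξ) := by
        rw [smul_add]
        exact add_le_add_right (le_add_of_nonneg_left (nsmul_nonneg hζ0 n)) a
      exact lt_of_lt_of_le hpos hle
    · intro hz
      by_contra hge
      have hz0 : z ≠ 0 := by
        intro h
        rw [h, (h0 0).2 rfl] at hge
        exact hge le_top
      obtain ⟨ζ, hζ⟩ := StmtAux.v_coe_of_ne_zero hval hz0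
      have hζneg : ζ < 0 := by
        by_contra h
        push_neg at h
        exact hge (by rw [hζ]; exact_mod_cast h)
      have hc : (0 : G) < -(n • ζ) := by
        have : 0 < n • (-ζ) := nsmul_pos (neg_pos.mpr hζneg) (by omega)
        rwa [smul_neg] at this
      obtain ⟨g, hg1, hg2⟩ := happ (-(n • ζ)) hc
      obtain ⟨x, hx⟩ := hsurj (-g)
      have hx0 : x ≠ 0 := StmtAux.v_ne_top hval hx
      have hmem : ∃ y : K, y ^ n + (-y) = t * x ^ n := by
        rw [hchar]
        refine Or.inr ⟨-g, hx, ?_⟩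
        rw [smul_neg, ← sub_eq_add_neg]
        exact hg1
      have hnot : ¬ ∃ y : K, y ^ n + (-y) = t * (z * x) ^ n := by
        rw [hchar]
        rintro (h | ⟨ξ, hξ, hpos⟩)
        · exact (mul_ne_zero hz0 hx0) h
        · have hvzx : v (z * x) = ((ζ + -g : G) : WithTop G) := by
            rw [hm, hζ, hx, WithTop.coe_add]
          have hξval : ξ = ζ + -g := by
            have := hξ.symm.trans hvzx
            exact_mod_cast this
          have hrw : a + n • ξ = (a - n • g) + n • ζ := by
            rw [hξval, smul_add, smul_neg]
            abel
          have h5 : (a - n • g) + n • ζ ≤ -(n • ζ) + n • ζ := add_le_add_left hg2 _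
          rw [neg_add_cancel] at h5
          rw [hrw] at hpos
          exact absurd hpos (not_lt.mpr h5)
      exact hnot (hz x hmem)
  -- assemble the definable set
  unfold DefinableOneParamRing
  refine ⟨StmtAux.phi n, t, ?_⟩
  rw [hset]
  ext z
  simp only [Set.mem_setOf_eq]
  rw [StmtAux.realize_phi n (fun i : Fin 2 => if i = 0 then z else t)]
  constructor
  · intro h x
    simpa using h x
  · intro h x
    simpa using h x
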